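/- Let a ≥ 2, 1 ≤ l ≤ a−1 and N ≥ 2a be integers, and let t, c ∈ ℂ. Then there is an isomorphism of ℂ-algebras ℂ⟦x,y,w⟧/(x·y + (w^{a−l−1}·(t·x + w^l) + c·w^a)² + w^N) ≅ ℂ⟦x,y,w⟧/(x·y + w^{2a−2}). -/

import Mathlib

open MvPowerSeries
open Finset

noncomputable section SubstAux

abbrev R3 := MvPowerSeries (Fin 3) ℂ

namespace SubstAux

def deg (e : Fin 3 →₀ ℕ) : ℕ := ∑ v, e v

lemma deg_add (e f : Fin 3 →₀ ℕ) : deg (e + f) = deg e + deg f := by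
  simp [deg, Finset.sum_add_distrib]

lemma deg_eq_zero {e : Fin 3 →₀ ℕ} (h : deg e = 0) : e = 0 := by
  ext v
  have := Finset.sum_eq_zero_iff.mp h v (Finset.mem_univ v)
  simpa using this

lemma apply_le_deg (e : Fin 3 →₀ ℕ) (v : Fin 3) : e v ≤ deg e :=
  Finset.single_le_sum (fun _ _ => Nat.zero_le _) (Finset.mem_univ v)

lemma deg_mono {e f : Fin 3 →₀ ℕ} (h : e ≤ f) : deg e ≤ deg f :=
  Finset.sum_le_sum fun v _ => h v

def Bnd (n : ℕ) : Fin 3 →₀ ℕ := Finsupp.equivFunOnFinite.symm (fun _ => n)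

lemma mem_Iic_Bnd {d : Fin 3 →₀ ℕ} {n : ℕ} : d ∈ Finset.Iic (Bnd n) ↔ ∀ v, d v ≤ n := by
  simp [Finset.mem_Iic, Bnd, Finsupp.le_def, Finsupp.equivFunOnFinite]; exact Iff.rfl

lemma mem_Iic_Bnd_of_deg_le {d : Fin 3 →₀ ℕ} {n : ℕ} (h : deg d ≤ n) :
    d ∈ Finset.Iic (Bnd n) :=
  mem_Iic_Bnd.mpr fun v => le_trans (apply_le_deg d v) h


/-- generic finite-sum support lemma -/
lemma sum_eq_of_ne_zero_iff {α M : Type*} [AddCommMonoid M] {f : α → M} {S T : Finset α}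
    (h : ∀ x, f x ≠ 0 → (x ∈ S ↔ x ∈ T)) : ∑ x ∈ S, f x = ∑ x ∈ T, f x := by
  classical
  rw [← Finset.sum_filter_ne_zero S, ← Finset.sum_filter_ne_zero T]
  apply Finset.sum_congr _ (fun _ _ => rfl)
  ext x
  simp only [Finset.mem_filter]
  constructor
  · rintro ⟨hx, hne⟩; exact ⟨(h x hne).mp hx, hne⟩
  · rintro ⟨hx, hne⟩; exact ⟨(h x hne).mpr hx, hne⟩

/-- `Lo n F` means `F` has order ≥ n. -/
def Lo (n : ℕ) (F : R3) : Prop := ∀ e, deg e < n → MvPowerSeries.coeff (R := ℂ) e F = 0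

lemma Lo.mul {m n : ℕ} {F G : R3} (hF : Lo m F) (hG : Lo n G) : Lo (m + n) (F * G) := by
  intro e he
  rw [MvPowerSeries.coeff_mul]
  apply Finset.sum_eq_zero
  rintro ⟨p, q⟩ hpq
  rw [Finset.HasAntidiagonal.mem_antidiagonal] at hpq
  have hd : deg p + deg q < m + n := by rw [← deg_add, hpq]; exact he
  rcases lt_or_ge (deg p) m with h | h
  · rw [hF p h, zero_mul]
  · rw [hG q (by omega), mul_zero]

lemma Lo.one_of {F : R3} (h : MvPowerSeries.constantCoeff (σ := Fin 3) (R := ℂ) F = 0) : Lo 1 F := by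
  intro e he
  have : e = 0 := deg_eq_zero (by omega)
  subst this
  exact h

lemma Lo.pow {F : R3} (h : Lo 1 F) (n : ℕ) : Lo n (F ^ n) := by
  induction n with
  | zero => intro e he; omega
  | succ k ih =>
    rw [pow_succ]
    exact ih.mul h

def mon (a : Fin 3 → R3) (d : Fin 3 →₀ ℕ) : R3 := ∏ v, a v ^ d v

lemma mon_zero (a : Fin 3 → R3) : mon a 0 = 1 := by simp [mon]

lemma mon_add (a : Fin 3 → R3) (d e : Fin 3 →₀ ℕ) : mon a (d + e) = mon a d * mon a e := by
  simp [mon, pow_add, Finset.prod_mul_distrib]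

lemma mon_lo {a : Fin 3 → R3} (ha : ∀ v, MvPowerSeries.constantCoeff (σ := Fin 3) (R := ℂ) (a v) = 0)
    (d : Fin 3 →₀ ℕ) : Lo (deg d) (mon a d) := by
  have key : ∀ s : Finset (Fin 3), Lo (∑ v ∈ s, d v) (∏ v ∈ s, a v ^ d v) := by
    intro s
    induction s using Finset.induction with
    | empty => intro e he; simp at he
    | @insert x s' hx ih =>
      rw [Finset.sum_insert hx, Finset.prod_insert hx]
      exact ((Lo.one_of (ha x)).pow (d x)).mul ih
  exact key Finset.univ

lemma coeff_mon_eq_zero {a : Fin 3 → R3} (ha : ∀ v, MvPowerSeries.constantCoeff (σ := Fin 3) (R := ℂ) (a v) = 0)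
    {d e : Fin 3 →₀ ℕ} (h : deg e < deg d) : MvPowerSeries.coeff (R := ℂ) e (mon a d) = 0 :=
  mon_lo ha d e h

/-- substitution of `a v` for `X v`. -/
def T (a : Fin 3 → R3) (F : R3) : R3 :=
  fun e => ∑ d ∈ Finset.Iic (Bnd (deg e)),
    MvPowerSeries.coeff (R := ℂ) d F * MvPowerSeries.coeff (R := ℂ) e (mon a d)

lemma coeff_T (a : Fin 3 → R3) (F : R3) (e : Fin 3 →₀ ℕ) :
    MvPowerSeries.coeff (R := ℂ) e (T a F) =
      ∑ d ∈ Finset.Iic (Bnd (deg e)),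
        MvPowerSeries.coeff (R := ℂ) d F * MvPowerSeries.coeff (R := ℂ) e (mon a d) := rfl

variable {a : Fin 3 → R3} (ha : ∀ v, MvPowerSeries.constantCoeff (σ := Fin 3) (R := ℂ) (a v) = 0)

include ha in
/-- the defining sum can be taken over any finset containing all `d` with `deg d ≤ deg e`. -/
lemma coeff_T_eq {S : Finset (Fin 3 →₀ ℕ)} {e : Fin 3 →₀ ℕ}
    (hS : ∀ d, deg d ≤ deg e → d ∈ S) (F : R3) :
    ∑ d ∈ S, MvPowerSeries.coeff (R := ℂ) d F * MvPowerSeries.coeff (R := ℂ) e (mon a d) =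
      MvPowerSeries.coeff (R := ℂ) e (T a F) := by
  rw [coeff_T]
  apply sum_eq_of_ne_zero_iff
  intro d hd
  have hdeg : deg d ≤ deg e := by
    by_contra hcon
    exact hd (by rw [coeff_mon_eq_zero ha (by omega), mul_zero])
  simp [hS d hdeg, mem_Iic_Bnd_of_deg_le hdeg]

include ha in
lemma T_mul (F G : R3) : T a (F * G) = T a F * T a G := by
  ext e
  set D := Finset.Iic (Bnd (deg e)) with hD
  have hDmem : ∀ d : Fin 3 →₀ ℕ, deg d ≤ deg e → d ∈ D := fun d hd => mem_Iic_Bnd_of_deg_le hd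
  -- LHS
  have hdisj : (↑D : Set (Fin 3 →₀ ℕ)).PairwiseDisjoint Finset.HasAntidiagonal.antidiagonal := by
    intro d1 _ d2 _ hne
    simp only [Finset.disjoint_left]
    intro p hp1 hp2
    rw [Finset.HasAntidiagonal.mem_antidiagonal] at hp1 hp2
    exact hne (hp1 ▸ hp2)
  have lhs_eq : MvPowerSeries.coeff (R := ℂ) e (T a (F * G)) =
      ∑ p ∈ D ×ˢ D, MvPowerSeries.coeff (R := ℂ) p.1 F * MvPowerSeries.coeff (R := ℂ) p.2 G *
        MvPowerSeries.coeff (R := ℂ) e (mon a p.1 * mon a p.2) := by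
    rw [coeff_T]
    have step1 : ∀ d ∈ D, MvPowerSeries.coeff (R := ℂ) d (F * G) * MvPowerSeries.coeff (R := ℂ) e (mon a d) =
        ∑ p ∈ Finset.HasAntidiagonal.antidiagonal d, MvPowerSeries.coeff (R := ℂ) p.1 F * MvPowerSeries.coeff (R := ℂ) p.2 G *
          MvPowerSeries.coeff (R := ℂ) e (mon a p.1 * mon a p.2) := by
      intro d _
      rw [MvPowerSeries.coeff_mul, Finset.sum_mul]
      apply Finset.sum_congr rfl
      intro p hp
      rw [Finset.HasAntidiagonal.mem_antidiagonal] at hp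
      rw [← mon_add, hp]
    rw [Finset.sum_congr rfl step1, ← Finset.sum_biUnion hdisj]
    apply sum_eq_of_ne_zero_iff
    intro p hp
    have hmon : MvPowerSeries.coeff (R := ℂ) e (mon a (p.1 + p.2)) ≠ 0 := by
      rw [mon_add]; intro h0; exact hp (by rw [h0, mul_zero])
    have hdeg : deg (p.1 + p.2) ≤ deg e := by
      by_contra hcon
      exact hmon (coeff_mon_eq_zero ha (by omega))
    rw [deg_add] at hdeg
    constructor
    · intro _
      exact Finset.mem_product.mpr ⟨hDmem _ (by omega), hDmem _ (by omega)⟩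
    · intro _
      apply Finset.mem_biUnion.mpr
      exact ⟨p.1 + p.2, hDmem _ (by rw [deg_add]; omega), Finset.HasAntidiagonal.mem_antidiagonal.mpr rfl⟩
  -- RHS
  have rhs_eq : MvPowerSeries.coeff (R := ℂ) e (T a F * T a G) =
      ∑ q ∈ Finset.HasAntidiagonal.antidiagonal e, ∑ p ∈ D ×ˢ D,
        MvPowerSeries.coeff (R := ℂ) p.1 F * MvPowerSeries.coeff (R := ℂ) p.2 G *
          (MvPowerSeries.coeff (R := ℂ) q.1 (mon a p.1) * MvPowerSeries.coeff (R := ℂ) q.2 (mon a p.2)) := by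
    rw [MvPowerSeries.coeff_mul]
    apply Finset.sum_congr rfl
    intro q hq
    rw [Finset.HasAntidiagonal.mem_antidiagonal] at hq
    have hq1 : deg q.1 ≤ deg e := by rw [← hq, deg_add]; omega
    have hq2 : deg q.2 ≤ deg e := by rw [← hq, deg_add]; omega
    rw [← coeff_T_eq ha (fun d hd => hDmem d (le_trans hd hq1)) F,
        ← coeff_T_eq ha (fun d hd => hDmem d (le_trans hd hq2)) G,
        Finset.sum_mul_sum]
    rw [Finset.sum_product]
    apply Finset.sum_congr rfl; intro d1 _
    apply Finset.sum_congr rfl; intro d2 _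
    ring
  rw [lhs_eq, rhs_eq]
  rw [Finset.sum_comm]
  apply Finset.sum_congr rfl
  intro p _
  rw [MvPowerSeries.coeff_mul, Finset.mul_sum]

lemma T_add (F G : R3) : T a (F + G) = T a F + T a G := by
  ext e
  rw [map_add, coeff_T, coeff_T, coeff_T, ← Finset.sum_add_distrib]
  apply Finset.sum_congr rfl
  intro d _
  rw [map_add, add_mul]

lemma T_C (r : ℂ) : T a (MvPowerSeries.C (σ := Fin 3) (R := ℂ) r) = MvPowerSeries.C (σ := Fin 3) (R := ℂ) r := by
  ext e
  rw [coeff_T]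
  rw [Finset.sum_eq_single 0]
  · rw [mon_zero]
    by_cases he : e = 0 <;> simp [MvPowerSeries.coeff_C, MvPowerSeries.coeff_one, he]
  · intro d _ hd
    rw [MvPowerSeries.coeff_C, if_neg hd, zero_mul]
  · intro h0
    exact absurd (mem_Iic_Bnd.mpr (fun v => by simp)) h0

lemma mon_single_one (v : Fin 3) : mon a (Finsupp.single v 1) = a v := by
  rw [mon, Finset.prod_eq_single v]
  · simp
  · intro u _ hu; simp [Finsupp.single_apply, Ne.symm hu]
  · simp

include ha in
lemma T_X (v : Fin 3) : T a (X v) = a v := by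
  ext e
  rw [coeff_T]
  rw [Finset.sum_eq_single (Finsupp.single v 1)]
  · rw [MvPowerSeries.coeff_X, if_pos rfl, one_mul, mon_single_one]
  · intro d _ hd
    rw [MvPowerSeries.coeff_X, if_neg hd, zero_mul]
  · intro hnot
    have he : deg e = 0 := by
      by_contra hne
      apply hnot
      apply mem_Iic_Bnd_of_deg_le
      have : deg (Finsupp.single v 1) = 1 := by simp [deg, Finsupp.single_apply]
      omega
    rw [deg_eq_zero he, mon_single_one]
    have : MvPowerSeries.coeff (R := ℂ) (0 : Fin 3 →₀ ℕ) (a v) = 0 := ha v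
    rw [this, mul_zero]

lemma constantCoeff_T (F : R3) :
    MvPowerSeries.constantCoeff (σ := Fin 3) (R := ℂ) (T a F) = MvPowerSeries.constantCoeff (σ := Fin 3) (R := ℂ) F := by
  have : MvPowerSeries.coeff (R := ℂ) (0 : Fin 3 →₀ ℕ) (T a F) =
      MvPowerSeries.coeff (R := ℂ) (0 : Fin 3 →₀ ℕ) F := by
    rw [coeff_T]
    rw [Finset.sum_eq_single 0]
    · simp [mon_zero]
    · intro d hd hd0
      have hv : ∀ v, d v ≤ 0 := by
        have h0 : deg (0 : Fin 3 →₀ ℕ) = 0 := by simp [deg]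
        simpa [h0] using mem_Iic_Bnd.mp hd
      have : d = 0 := by ext v; simpa using hv v
      exact absurd this hd0
    · intro h0
      exact absurd (mem_Iic_Bnd.mpr (fun v => by simp)) h0
  simpa [MvPowerSeries.coeff_zero_eq_constantCoeff] using this

lemma T_id (F : R3) : T (fun v => X v) F = F := by
  ext e
  rw [coeff_T]
  have hmon : ∀ d : Fin 3 →₀ ℕ, mon (fun v => X v) d = MvPowerSeries.monomial (R := ℂ) d 1 := by
    intro d
    rw [mon]
    have : ∀ v : Fin 3, (X v : R3) ^ d v = MvPowerSeries.monomial (R := ℂ) (Finsupp.single v (d v)) 1 :=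
      fun v => MvPowerSeries.X_pow_eq v (d v)
    rw [Finset.prod_congr rfl (fun v _ => this v)]
    have hsum : ∀ s : Finset (Fin 3),
        (∏ v ∈ s, MvPowerSeries.monomial (R := ℂ) (Finsupp.single v (d v)) (1 : ℂ)) =
          MvPowerSeries.monomial (R := ℂ) (∑ v ∈ s, Finsupp.single v (d v)) 1 := by
      intro s
      induction s using Finset.induction with
      | empty => simp
      | @insert x s' hx ih =>
        rw [Finset.prod_insert hx, Finset.sum_insert hx, ih,
          MvPowerSeries.monomial_mul_monomial, one_mul]
    have hd : (∑ v : Fin 3, Finsupp.single v (d v)) = d := by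
      ext u
      rw [Finset.sum_apply']
      simp [Finsupp.single_apply]
    rw [hsum, hd]
  rw [Finset.sum_congr rfl (fun d _ => by rw [hmon d])]
  rw [Finset.sum_eq_single e]
  · rw [MvPowerSeries.coeff_monomial, if_pos rfl, mul_one]
  · intro d _ hd
    rw [MvPowerSeries.coeff_monomial, if_neg (Ne.symm hd), mul_zero]
  · intro h0
    exact absurd (mem_Iic_Bnd_of_deg_le le_rfl) h0

include ha in
lemma T_comp {b : Fin 3 → R3} (hb : ∀ v, MvPowerSeries.constantCoeff (σ := Fin 3) (R := ℂ) (b v) = 0)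
    (F : R3) : T b (T a F) = T (fun v => T b (a v)) F := by
  have hc : ∀ v, MvPowerSeries.constantCoeff (σ := Fin 3) (R := ℂ) (T b (a v)) = 0 := by
    intro v; rw [constantCoeff_T]; exact ha v
  ext e
  set S := Finset.Iic (Bnd (3 * deg e)) with hS
  have hSmem : ∀ d : Fin 3 →₀ ℕ, deg d ≤ 3 * deg e → d ∈ S := fun d hd => mem_Iic_Bnd_of_deg_le hd
  have lhs_eq : MvPowerSeries.coeff (R := ℂ) e (T b (T a F)) =
      ∑ d1 ∈ S, MvPowerSeries.coeff (R := ℂ) d1 F *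
        MvPowerSeries.coeff (R := ℂ) e (T b (mon a d1)) := by
    rw [coeff_T]
    have step : ∀ d2 ∈ Finset.Iic (Bnd (deg e)),
        MvPowerSeries.coeff (R := ℂ) d2 (T a F) * MvPowerSeries.coeff (R := ℂ) e (mon b d2) =
        ∑ d1 ∈ S, MvPowerSeries.coeff (R := ℂ) d1 F *
          (MvPowerSeries.coeff (R := ℂ) d2 (mon a d1) * MvPowerSeries.coeff (R := ℂ) e (mon b d2)) := by
      intro d2 hd2
      have hd2e : deg d2 ≤ 3 * deg e := by
        have hv := mem_Iic_Bnd.mp hd2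
        have h0 := hv 0; have h1 := hv 1; have h2 := hv 2
        have h0' : deg d2 = d2 0 + d2 1 + d2 2 := by simp [deg, Fin.sum_univ_three]
        omega
      rw [← coeff_T_eq ha (S := S) (fun d hd => hSmem d (le_trans hd hd2e)) F, Finset.sum_mul]
      apply Finset.sum_congr rfl
      intro d1 _
      ring
    rw [Finset.sum_congr rfl step, Finset.sum_comm]
    apply Finset.sum_congr rfl
    intro d1 _
    rw [coeff_T, ← Finset.mul_sum]
  have hTone : T b 1 = 1 := by
    have := T_C (a := b) 1
    simpa using this
  have hTbmon : ∀ d : Fin 3 →₀ ℕ, T b (mon a d) = mon (fun v => T b (a v)) d := by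
    intro d
    rw [mon, mon]
    have : ∀ s : Finset (Fin 3),
        T b (∏ v ∈ s, a v ^ d v) = ∏ v ∈ s, T b (a v) ^ d v := by
      intro s
      induction s using Finset.induction with
      | empty => simpa using hTone
      | @insert x s' hx ih =>
        rw [Finset.prod_insert hx, Finset.prod_insert hx, T_mul hb, ih]
        congr 1
        induction d x with
        | zero => simpa using hTone
        | succ k ihk => rw [pow_succ, pow_succ, T_mul hb, ihk]
    exact this Finset.univ
  rw [lhs_eq]
  rw [Finset.sum_congr rfl (fun d _ => by rw [hTbmon d])]
  apply coeff_T_eq hc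
  intro d hd
  exact hSmem d (by omega)

variable (a) in
/-- the substitution algebra homomorphism. -/
def Thom : R3 →ₐ[ℂ] R3 where
  toFun := T a
  map_one' := by simpa using T_C (a := a) 1
  map_mul' := T_mul ha
  map_zero' := by simpa using T_C (a := a) 0
  map_add' := T_add
  commutes' := fun r => by
    simp only [MvPowerSeries.algebraMap_apply, Algebra.algebraMap_self, RingHom.id_apply]
    exact T_C r

lemma Thom_apply (F : R3) : Thom a ha F = T a F := rfl

/-- the substitution algebra equivalence. -/
def substEquiv {b : Fin 3 → R3} (hb : ∀ v, MvPowerSeries.constantCoeff (σ := Fin 3) (R := ℂ) (b v) = 0)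
    (hab : ∀ v, T a (b v) = X v) (hba : ∀ v, T b (a v) = X v) : R3 ≃ₐ[ℂ] R3 :=
  AlgEquiv.ofAlgHom (Thom a ha) (Thom b hb)
    (AlgHom.ext fun F => by
      show T a (T b F) = F
      rw [T_comp hb ha, show (fun v => T a (b v)) = fun v => (X v : R3) from funext hab, T_id])
    (AlgHom.ext fun F => by
      show T b (T a F) = F
      rw [T_comp ha hb, show (fun v => T b (a v)) = fun v => (X v : R3) from funext hba, T_id])

lemma substEquiv_apply {b : Fin 3 → R3} (hb : ∀ v, MvPowerSeries.constantCoeff (σ := Fin 3) (R := ℂ) (b v) = 0)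
    (hab : ∀ v, T a (b v) = X v) (hba : ∀ v, T b (a v) = X v) (F : R3) :
    substEquiv ha hb hab hba F = T a F := rfl

end SubstAux
end SubstAux

open SubstAux

/-- For a ≥ 2, 1 ≤ l ≤ a−1, N ≥ 2a and t, c ∈ ℂ:
ℂ⟦x,y,w⟧/(xy + (w^{a−l−1}(tx + wˡ) + c·wᵃ)² + wᴺ) ≅ ℂ⟦x,y,w⟧/(xy + w^{2a−2}).
Variables: x = 0, y = 1, w = 2. -/
theorem stmt_3 (a l N : ℕ) (ha : 2 ≤ a) (hl1 : 1 ≤ l) (hl2 : l ≤ a - 1) (hN : 2 * a ≤ N)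
    (t c : ℂ) :
    Nonempty
      ((MvPowerSeries (Fin 3) ℂ ⧸
          Ideal.span ({X 0 * X 1 +
            (X 2 ^ (a - l - 1) * (C (σ := Fin 3) (R := ℂ) t * X 0 + X 2 ^ l) + C (σ := Fin 3) (R := ℂ) c * X 2 ^ a) ^ 2
            + X 2 ^ N} : Set (MvPowerSeries (Fin 3) ℂ))) ≃ₐ[ℂ]
       (MvPowerSeries (Fin 3) ℂ ⧸
          Ideal.span ({X 0 * X 1 + X 2 ^ (2 * a - 2)} : Set (MvPowerSeries (Fin 3) ℂ)))) := by
  obtain ⟨m, hm⟩ : ∃ m, a = l + 1 + m := ⟨a - l - 1, by omega⟩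
  obtain ⟨n, hn⟩ : ∃ n, N = 2 * l + 2 * m + 2 + n := ⟨N - 2 * a, by omega⟩
  rw [show a - l - 1 = m from by omega, hn, hm,
    show 2 * (l + 1 + m) - 2 = 2 * l + 2 * m from by omega]
  set x : R3 := X 0 with hx
  set y : R3 := X 1 with hy
  set w : R3 := X 2 with hw
  set Ct : R3 := C (σ := Fin 3) (R := ℂ) t with hCt
  set Cc : R3 := C (σ := Fin 3) (R := ℂ) c with hCc
  set u : R3 := 1 + 2 * Cc * w + Cc ^ 2 * w ^ 2 + w ^ (n + 2) with hu_def
  have hu : MvPowerSeries.constantCoeff (σ := Fin 3) (R := ℂ) u = 1 := by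
    simp [hu_def, hw, hCc, map_add, map_mul, map_pow, MvPowerSeries.constantCoeff_X]
  set U : R3 := MvPowerSeries.invOfUnit u 1 with hU_def
  have huU : u * U = 1 := MvPowerSeries.mul_invOfUnit u 1 (by rw [hu]; rfl)
  have hUu : U * u = 1 := by rw [mul_comm]; exact huU
  set g : R3 := Ct ^ 2 * x * w ^ (2 * m) + 2 * Ct * w ^ (l + 2 * m)
      + 2 * Ct * Cc * w ^ (l + 2 * m + 1) with hg_def
  set gb : R3 := Ct ^ 2 * (x * u) * w ^ (2 * m) + 2 * Ct * w ^ (l + 2 * m)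
      + 2 * Ct * Cc * w ^ (l + 2 * m + 1) with hgb_def
  set afam : Fin 3 → R3 := ![x * U, y + g, w] with hafam
  set bfam : Fin 3 → R3 := ![x * u, y - gb, w] with hbfam
  have hz1 : (0 : ℂ) ^ (l + 2 * m) = 0 := zero_pow (by omega)
  have hz2 : (0 : ℂ) ^ (l + 2 * m + 1) = 0 := zero_pow (by omega)
  have hca : ∀ v, MvPowerSeries.constantCoeff (σ := Fin 3) (R := ℂ) (afam v) = 0 := by
    intro v
    fin_cases v
    · show MvPowerSeries.constantCoeff (σ := Fin 3) (R := ℂ) (x * U) = 0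
      rw [hx, map_mul, MvPowerSeries.constantCoeff_X, zero_mul]
    · show MvPowerSeries.constantCoeff (σ := Fin 3) (R := ℂ) (y + g) = 0
      simp [hy, hg_def, hx, hw, hCt, hCc, map_add, map_mul, map_pow,
        MvPowerSeries.constantCoeff_X, hz1, hz2]
    · show MvPowerSeries.constantCoeff (σ := Fin 3) (R := ℂ) w = 0
      rw [hw, MvPowerSeries.constantCoeff_X]
  have hcb : ∀ v, MvPowerSeries.constantCoeff (σ := Fin 3) (R := ℂ) (bfam v) = 0 := by
    intro v
    fin_cases v
    · show MvPowerSeries.constantCoeff (σ := Fin 3) (R := ℂ) (x * u) = 0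
      rw [hx, map_mul, MvPowerSeries.constantCoeff_X, zero_mul]
    · show MvPowerSeries.constantCoeff (σ := Fin 3) (R := ℂ) (y - gb) = 0
      simp [hy, hgb_def, hx, hw, hCt, hCc, map_add, map_sub, map_mul, map_pow,
        MvPowerSeries.constantCoeff_X, hz1, hz2]
    · show MvPowerSeries.constantCoeff (σ := Fin 3) (R := ℂ) w = 0
      rw [hw, MvPowerSeries.constantCoeff_X]
  set Φa := Thom afam hca with hΦa_def
  set Φb := Thom bfam hcb with hΦb_def
  have hΦax : Φa x = x * U := T_X hca 0
  have hΦay : Φa y = y + g := T_X hca 1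
  have hΦaw : Φa w = w := T_X hca 2
  have hΦbx : Φb x = x * u := T_X hcb 0
  have hΦby : Φb y = y - gb := T_X hcb 1
  have hΦbw : Φb w = w := T_X hcb 2
  have hΦaCt : Φa Ct = Ct := by rw [hCt]; exact T_C t
  have hΦaCc : Φa Cc = Cc := by rw [hCc]; exact T_C c
  have hΦbCt : Φb Ct = Ct := by rw [hCt]; exact T_C t
  have hΦbCc : Φb Cc = Cc := by rw [hCc]; exact T_C c
  have hΦau : Φa u = u := by
    simp only [hu_def, map_add, map_mul, map_pow, map_one, map_ofNat, hΦaw, hΦaCc]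
  have hΦbu : Φb u = u := by
    simp only [hu_def, map_add, map_mul, map_pow, map_one, map_ofNat, hΦbw, hΦbCc]
  have hΦbU : u * Φb U = 1 := by rw [← hΦbu, ← map_mul, huU, map_one]
  have haxu : Φa (x * u) = x := by
    rw [map_mul, hΦax, hΦau, mul_assoc, mul_comm U u, huU, mul_one]
  have hΦag : Φa gb = g := by
    simp only [hgb_def, hg_def, map_add, map_mul, map_pow, map_ofNat, hΦaw, hΦaCt, hΦaCc, haxu]
  have hΦbg : Φb g = gb := by
    simp only [hg_def, hgb_def, map_add, map_mul, map_pow, map_ofNat, hΦbw, hΦbCt, hΦbCc, hΦbx]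
  have hab : ∀ v, T afam (bfam v) = X v := by
    intro v
    fin_cases v
    · show Φa (x * u) = x
      exact haxu
    · show Φa (y - gb) = y
      rw [map_sub, hΦay, hΦag]; ring
    · show Φa w = w
      exact hΦaw
  have hba : ∀ v, T bfam (afam v) = X v := by
    intro v
    fin_cases v
    · show Φb (x * U) = x
      rw [map_mul, hΦbx, mul_assoc, hΦbU, mul_one]
    · show Φb (y + g) = y
      rw [map_add, hΦby, hΦbg]; ring
    · show Φb w = w
      exact hΦbw
  set Φ := substEquiv hca hcb hab hba with hΦ_def
  set f : R3 := x * y + (w ^ m * (Ct * x + w ^ l) + Cc * w ^ (l + 1 + m)) ^ 2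
      + w ^ (2 * l + 2 * m + 2 + n) with hf_def
  set G : R3 := x * y + w ^ (2 * l + 2 * m) with hG_def
  have key : x * (y + g) + u * w ^ (2 * l + 2 * m) = f := by
    rw [hg_def, hu_def, hf_def]; ring
  have hΦG : Φ G = U * f := by
    have h1 : Φ G = Φa G := rfl
    rw [h1, hG_def, map_add, map_mul, hΦax, hΦay, map_pow, hΦaw, ← key]
    calc x * U * (y + g) + w ^ (2 * l + 2 * m)
        = U * (x * (y + g)) + (U * u) * w ^ (2 * l + 2 * m) := by rw [hUu]; ring
      _ = U * (x * (y + g) + u * w ^ (2 * l + 2 * m)) := by ring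
  have hunit : IsUnit U := IsUnit.of_mul_eq_one (b := u) hUu
  have hIJ : Ideal.span {f} = (Ideal.span {G}).map (Φ : R3 →+* R3) := by
    rw [Ideal.map_span, Set.image_singleton]
    show Ideal.span {f} = Ideal.span {Φ G}
    rw [hΦG, Ideal.span_singleton_mul_left_unit hunit]
  exact ⟨(Ideal.quotientEquivAlg (Ideal.span {G}) (Ideal.span {f}) Φ hIJ).symm⟩
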